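/- Let A be a real symmetric n×n matrix and let B = [[A, A⊗1ᵀ_m],[A⊗1_m, 0_{mn}]] be the adjacency matrix of the m-splitting graph. Then the k-th diagonal entry of |B| (for k ≤ n, an original vertex) equals ((2m+1)/√(4m+1)) times the k-th diagonal entry of |A|. -/

import Mathlib

open Matrix

lemma psd_smul_aux {N : Type*} [Fintype N] {M : Matrix N N ℝ} (h : M.PosSemidef)
    {c : ℝ} (hc : 0 ≤ c) : (c • M).PosSemidef := by
  refine ⟨?_, fun x => ?_⟩
  · unfold Matrix.IsHermitian
    rw [conjTranspose_smul, h.1.eq]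
    simp
  · convert mul_nonneg hc (h.2 x) using 1
    simp only [Finsupp.mul_sum, Matrix.smul_apply, smul_eq_mul, star_trivial]
    exact Finsupp.sum_congr fun i _ => Finsupp.sum_congr fun j _ => by ring

theorem stmt_14 (n m : ℕ) (hm : 1 ≤ m)
    (A : Matrix (Fin n) (Fin n) ℝ) (hA : A.IsSymm)
    (B : Matrix (Fin n ⊕ Fin m × Fin n) (Fin n ⊕ Fin m × Fin n) ℝ)
    (hB : B = Matrix.fromBlocks A
      (Matrix.of fun i (p : Fin m × Fin n) => A i p.2)
      (Matrix.of fun (p : Fin m × Fin n) j => A p.2 j)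
      0)
    (S : Matrix (Fin n) (Fin n) ℝ) (hS : S.PosSemidef) (hS2 : S ^ 2 = A ^ 2)
    (T : Matrix (Fin n ⊕ Fin m × Fin n) (Fin n ⊕ Fin m × Fin n) ℝ)
    (hT : T.PosSemidef) (hT2 : T ^ 2 = B ^ 2) :
    ∀ k : Fin n, T (Sum.inl k) (Sum.inl k)
      = ((2 * m + 1) / Real.sqrt (4 * m + 1)) * S k k := by
  intro k
  set s : ℝ := Real.sqrt (4 * m + 1) with hs_def
  have hs_pos : 0 < s := Real.sqrt_pos.mpr (by positivity)
  have hs_sq : s ^ 2 = 4 * m + 1 := Real.sq_sqrt (by positivity)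
  have hs_ne : s ≠ 0 := ne_of_gt hs_pos
  set T' : Matrix (Fin n ⊕ Fin m × Fin n) (Fin n ⊕ Fin m × Fin n) ℝ :=
    Matrix.fromBlocks (((2 * (m : ℝ) + 1) / s) • S)
      (Matrix.of fun a (p : Fin m × Fin n) => (1 / s) * S a p.2)
      (Matrix.of fun (p : Fin m × Fin n) b => (1 / s) * S p.2 b)
      (Matrix.of fun (p q : Fin m × Fin n) => (2 / s) * S p.2 q.2) with hT'def
  set E₁ : Matrix (Fin n) (Fin n ⊕ Fin m × Fin n) ℝ :=
    Matrix.of fun a => Sum.elim (fun b => if a = b then 1 else 0) (fun _ => 0) with hE₁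
  set E₂ : Matrix (Fin n) (Fin n ⊕ Fin m × Fin n) ℝ :=
    Matrix.of fun a => Sum.elim (fun b => if a = b then (1/2 : ℝ) else 0)
      (fun p => if a = p.2 then 1 else 0) with hE₂
  have hdecomp : T' = ((2 * (m : ℝ) + 1 / 2) / s) • (E₁ᴴ * S * E₁)
      + (2 / s) • (E₂ᴴ * S * E₂) := by
    ext u v
    rcases u with a | p <;> rcases v with b | q <;>
      simp [T', E₁, E₂, Matrix.mul_apply, Matrix.conjTranspose_apply,
        ite_mul, mul_ite, Finset.sum_ite_eq, Finset.sum_ite_eq'] <;>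
      ring
  have hT'psd : T'.PosSemidef := by
    rw [hdecomp]
    exact (psd_smul_aux (hS.conjTranspose_mul_mul_same E₁)
        (div_nonneg (by positivity) hs_pos.le)).add
      (psd_smul_aux (hS.conjTranspose_mul_mul_same E₂)
        (div_nonneg (by positivity) hs_pos.le))
  have hSS : ∀ a b, (∑ j, S a j * S j b) = ∑ j, A a j * A j b := by
    intro a b
    have h := congrFun (congrFun hS2 a) b
    simpa [pow_two, Matrix.mul_apply] using h
  have key : ∀ (c d : ℝ) (a b : Fin n),
      (∑ x, c * S a x * (d * S x b)) = c * d * ∑ x, A a x * A x b := by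
    intro c d a b
    rw [← hSS a b, Finset.mul_sum]
    exact Finset.sum_congr rfl fun x _ => by ring
  have hT'sq : T' ^ 2 = B ^ 2 := by
    rw [pow_two, pow_two, hB]
    ext u v
    rcases u with a | p <;> rcases v with b | q <;>
      simp only [T', Matrix.mul_apply, Fintype.sum_sum_type, Fintype.sum_prod_type,
        Matrix.fromBlocks_apply₁₁, Matrix.fromBlocks_apply₁₂, Matrix.fromBlocks_apply₂₁,
        Matrix.fromBlocks_apply₂₂, Matrix.of_apply, Matrix.smul_apply, smul_eq_mul,
        Matrix.zero_apply, mul_zero, zero_mul, Finset.sum_const_zero, add_zero, zero_add,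
        Finset.sum_const, Finset.card_univ, Fintype.card_fin, nsmul_eq_mul, key]
    all_goals
      have hprod : ∀ x y : ℝ, x / s * (y / s) = x * y / (4 * (m : ℝ) + 1) := fun x y => by
        rw [div_mul_div_comm, ← hs_sq, sq]
      have h41 : (4 * (m : ℝ) + 1) ≠ 0 := by positivity
      simp only [hprod]
      field_simp
      ring
  have hTT' : T = T' := by
    open scoped MatrixOrder in
    exact (CFC.sq_eq_sq_iff T T' hT.nonneg hT'psd.nonneg).mp (hT2.trans hT'sq.symm)
  rw [hTT']
  simp [T']
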